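/- Let a > 0 and ε > 0, and let u : [0,1] × [0,∞) → ℝ be twice continuously differentiable and satisfy the advection–diffusion equation ∂_t u + a ∂_x u − ε ∂_{xx} u = 0 on [0,1] × (0,∞). Define g_L(t) := a u(0,t) − ε ∂_x u(0,t) and g_R(t) := ε ∂_x u(1,t). Then for every t > 0, d/dt ∫_0^1 u(x,t)² dx + 2ε ∫_0^1 (∂_x u(x,t))² dx = (1/a)[g_L(t)² + g_R(t)²] − (1/a)[(ε ∂_x u(0,t))² + (a u(1,t) − ε ∂_x u(1,t))²]. -/

import Mathlib

open MeasureTheory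
open intervalIntegral Metric

/-- Energy rate for the advection–diffusion equation
`u_t + a u_x − ε u_xx = 0` on `[0,1]`, with Robin datum
`g_L = a u(0,t) − ε u_x(0,t)` and Neumann datum `g_R = ε u_x(1,t)`:
`d/dt ∫ u² + 2ε ∫ u_x² = (1/a)[g_L² + g_R²] − (1/a)[(ε u_x(0,t))² + (a u(1,t) − ε u_x(1,t))²]`. -/
theorem advection_diffusion_energy_rate
    (a ε : ℝ) (ha : 0 < a) (hε : 0 < ε) (u : ℝ → ℝ → ℝ)
    (hu : ContDiff ℝ 2 (Function.uncurry u))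
    (hpde : ∀ x ∈ Set.Icc (0 : ℝ) 1, ∀ t : ℝ, 0 < t →
      deriv (u x) t + a * deriv (fun y => u y t) x
        - ε * deriv (fun y => deriv (fun z => u z t) y) x = 0) :
    ∀ t : ℝ, 0 < t →
      HasDerivAt (fun s => ∫ x in (0 : ℝ)..1, u x s ^ 2)
        (1 / a * ((a * u 0 t - ε * deriv (fun y => u y t) 0) ^ 2
            + (ε * deriv (fun y => u y t) 1) ^ 2)
          - 1 / a * ((ε * deriv (fun y => u y t) 0) ^ 2
            + (a * u 1 t - ε * deriv (fun y => u y t) 1) ^ 2)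
          - 2 * ε * ∫ x in (0 : ℝ)..1, (deriv (fun y => u y t) x) ^ 2) t := by
  intro t ht
  have hud : Differentiable ℝ (Function.uncurry u) := hu.differentiable (by norm_num)
  have hcu : Continuous (Function.uncurry u) := hud.continuous
  -- the time partial derivative, as application of the fderiv
  set D : ℝ → ℝ → ℝ := fun x s => (fderiv ℝ (Function.uncurry u) (x, s)) (0, 1) with hD
  have hDt : ∀ x s : ℝ, HasDerivAt (u x) (D x s) s := by
    intro x s
    have h1 : HasDerivAt (fun s' : ℝ => ((x : ℝ), s')) ((0 : ℝ), (1 : ℝ)) s :=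
      (hasDerivAt_const s x).prodMk (hasDerivAt_id s)
    exact (hud (x, s)).hasFDerivAt.comp_hasDerivAt s h1
  have hDcont : Continuous fun p : ℝ × ℝ => D p.1 p.2 := by
    have h1 : Continuous fun p : ℝ × ℝ => fderiv ℝ (Function.uncurry u) p :=
      hu.continuous_fderiv (by norm_num)
    exact h1.clm_apply continuous_const
  -- the integrand of the derivative, continuous in (x,s)
  have hGcont : Continuous fun p : ℝ × ℝ => 2 * u p.1 p.2 * D p.1 p.2 := by
    fun_prop
  -- Step 1: differentiate under the integral sign
  have step1 : HasDerivAt (fun s => ∫ x in (0 : ℝ)..1, u x s ^ 2)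
      (∫ x in (0 : ℝ)..1, 2 * u x t * D x t) t := by
    -- bound on the compact set
    obtain ⟨M, hM⟩ : ∃ M, ∀ p ∈ (Set.Icc (0:ℝ) 1) ×ˢ (Set.Icc (t - 1) (t + 1)),
        ‖2 * u p.1 p.2 * D p.1 p.2‖ ≤ M := by
      rcases (isCompact_Icc.prod isCompact_Icc).exists_bound_of_continuousOn
        hGcont.continuousOn with ⟨M, hM⟩
      exact ⟨M, hM⟩
    have hres : ∀ x ∈ Set.uIoc (0:ℝ) 1, x ∈ Set.Icc (0:ℝ) 1 := by
      intro x hx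
      rw [Set.uIoc_of_le (by norm_num : (0:ℝ) ≤ 1)] at hx
      exact ⟨le_of_lt hx.1, hx.2⟩
    have key := hasDerivAt_integral_of_dominated_loc_of_deriv_le
      (F := fun s x => u x s ^ 2) (F' := fun s x => 2 * u x s * D x s)
      (x₀ := t) (a := (0:ℝ)) (b := 1) (μ := volume) (bound := fun _ => M)
      (s := ball t 1) (ball_mem_nhds t one_pos)
      (by
        filter_upwards with s
        exact (Continuous.pow (hcu.comp (continuous_id.prodMk continuous_const)) 2).aestronglyMeasurable.restrict)
      (by
        apply Continuous.intervalIntegrable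
        exact (hcu.comp (continuous_id.prodMk continuous_const)).pow 2)
      (by
        exact (hGcont.comp (continuous_id.prodMk continuous_const)).aestronglyMeasurable.restrict)
      (by
        refine Filter.Eventually.of_forall ?_
        intro x hx s hs
        refine hM (x, s) ⟨hres x hx, ?_⟩
        rw [mem_ball, Real.dist_eq] at hs
        constructor <;> [linarith [neg_abs_le (s - t)]; linarith [le_abs_self (s - t)]])
      (intervalIntegrable_const)
      (by
        refine Filter.Eventually.of_forall ?_
        intro x _ s _
        have := (hDt x s).fun_pow 2
        simpa [mul_comm, mul_assoc, mul_left_comm] using this)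
    exact key.2
  -- continuity/differentiability facts in x at time t
  set v : ℝ → ℝ := fun y => u y t with hv
  have hv2 : ContDiff ℝ 2 v := hu.comp (contDiff_id.prodMk contDiff_const)
  obtain ⟨hvd, hv1'⟩ :
      Differentiable ℝ v ∧ ContDiff ℝ 1 (deriv v) := by
    have := (contDiff_succ_iff_deriv (n := 1) (f := v) (𝕜 := ℝ)).mp (by exact_mod_cast hv2)
    exact ⟨this.1, this.2.2⟩
  obtain ⟨hv'd, hv''c⟩ : Differentiable ℝ (deriv v) ∧ Continuous (deriv (deriv v)) :=
    contDiff_one_iff_deriv.mp hv1'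
  have hvc : Continuous v := hvd.continuous
  have hv'c : Continuous (deriv v) := hv'd.continuous
  -- rewrite the integrand using the PDE
  have hDt_eq : ∀ x, D x t = deriv (u x) t := fun x => ((hDt x t).deriv).symm
  have hpde' : ∀ x ∈ Set.uIcc (0:ℝ) 1,
      2 * u x t * D x t = ε * (2 * v x * deriv (deriv v) x) - a * (2 * v x * deriv v x) := by
    intro x hx
    rw [Set.uIcc_of_le (by norm_num : (0:ℝ) ≤ 1)] at hx
    have h := hpde x hx t ht
    rw [hDt_eq x]
    have : deriv (u x) t = ε * deriv (deriv v) x - a * deriv v x := by linarith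
    rw [this]; ring
  have int_congr : (∫ x in (0 : ℝ)..1, 2 * u x t * D x t)
      = ∫ x in (0 : ℝ)..1, (ε * (2 * v x * deriv (deriv v) x) - a * (2 * v x * deriv v x)) :=
    intervalIntegral.integral_congr hpde'
  -- split the integral
  have hint1 : IntervalIntegrable (fun x => 2 * v x * deriv (deriv v) x) volume 0 1 := by
    apply Continuous.intervalIntegrable; fun_prop
  have hint2 : IntervalIntegrable (fun x => 2 * v x * deriv v x) volume 0 1 := by
    apply Continuous.intervalIntegrable; fun_prop
  have int_split : (∫ x in (0 : ℝ)..1, (ε * (2 * v x * deriv (deriv v) x) - a * (2 * v x * deriv v x)))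
      = ε * (∫ x in (0 : ℝ)..1, 2 * v x * deriv (deriv v) x)
        - a * (∫ x in (0 : ℝ)..1, 2 * v x * deriv v x) := by
    rw [intervalIntegral.integral_sub (hint1.const_mul ε) (hint2.const_mul a),
      intervalIntegral.integral_const_mul, intervalIntegral.integral_const_mul]
  -- ∫ 2 v v' = v 1 ^ 2 - v 0 ^ 2
  have IBP2 : (∫ x in (0 : ℝ)..1, 2 * v x * deriv v x) = v 1 ^ 2 - v 0 ^ 2 := by
    have := intervalIntegral.integral_eq_sub_of_hasDerivAt
      (f := fun x => v x ^ 2) (f' := fun x => 2 * v x * deriv v x) (a := (0:ℝ)) (b := 1)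
      (fun x _ => by simpa [mul_comm, mul_assoc, mul_left_comm] using (hvd x).hasDerivAt.fun_pow 2)
      hint2
    simpa using this
  -- ∫ 2 v v'' = 2 v(1) v'(1) - 2 v(0) v'(0) - 2 ∫ v'^2
  have IBP1 : (∫ x in (0 : ℝ)..1, 2 * v x * deriv (deriv v) x)
      = 2 * v 1 * deriv v 1 - 2 * v 0 * deriv v 0
        - 2 * ∫ x in (0 : ℝ)..1, (deriv v x) ^ 2 := by
    have h := intervalIntegral.integral_mul_deriv_eq_deriv_mul
      (u := fun x => 2 * v x) (u' := fun x => 2 * deriv v x)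
      (v := deriv v) (v' := deriv (deriv v)) (a := (0:ℝ)) (b := 1)
      (fun x _ => ((hvd x).hasDerivAt.const_mul 2))
      (fun x _ => (hv'd x).hasDerivAt)
      (by apply Continuous.intervalIntegrable; fun_prop)
      (by apply Continuous.intervalIntegrable; fun_prop)
    rw [h, ← intervalIntegral.integral_const_mul]
    congr 1
    apply intervalIntegral.integral_congr
    intro x _
    ring
  -- combine
  have final : (∫ x in (0 : ℝ)..1, 2 * u x t * D x t)
      = 1 / a * ((a * u 0 t - ε * deriv v 0) ^ 2 + (ε * deriv v 1) ^ 2)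
        - 1 / a * ((ε * deriv v 0) ^ 2 + (a * u 1 t - ε * deriv v 1) ^ 2)
        - 2 * ε * ∫ x in (0 : ℝ)..1, (deriv v x) ^ 2 := by
    rw [int_congr, int_split, IBP1, IBP2]
    have hvu0 : v 0 = u 0 t := rfl
    have hvu1 : v 1 = u 1 t := rfl
    rw [hvu0, hvu1]
    field_simp
    ring
  rw [← final]
  exact step1
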